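/- If an atomic flow A is cycle-free and A →_w* B, then B is cycle-free. -/

import Mathlib

set_option linter.unusedVariables false

namespace AF

/-! ### Formulae of system SKS.

Atoms are pairs `(n, b)`; the involution `ā` flips the Boolean, so it is
fixed-point free. -/

inductive Formula : Type
  | tt : Formula
  | ff : Formula
  | atom : ℕ → Bool → Formula
  | or : Formula → Formula → Formula
  | and : Formula → Formula → Formula
  deriving DecidableEq

namespace Formula

/-- Subformula at a position (`false` = left child, `true` = right child). -/
def sub : Formula → List Bool → Option Formula
  | φ, [] => some φ
  | .or α _, false :: p => sub α p
  | .or _ β, true :: p => sub β p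
  | .and α _, false :: p => sub α p
  | .and _ β, true :: p => sub β p
  | _, _ :: _ => none

/-- Replace the subformula at a position. -/
def repl : Formula → List Bool → Formula → Formula
  | _, [], ψ => ψ
  | .or α β, false :: p, ψ => .or (repl α p ψ) β
  | .or α β, true :: p, ψ => .or α (repl β p ψ)
  | .and α β, false :: p, ψ => .and (repl α p ψ) β
  | .and α β, true :: p, ψ => .and α (repl β p ψ)
  | φ, _ :: _, _ => φ

/-- `p` is an atom occurrence of `φ`. -/
def IsOcc (φ : Formula) (p : List Bool) : Prop :=
  ∃ n b, φ.sub p = some (.atom n b)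

end Formula

/-! ### Inference rules.

The rule `=` of SKS replaces a formula by an equivalent one under
commutativity, associativity and the unit equations; each single instance of
`=` applies one equation (in either direction), so we list the equations as
individual rule names, all marked as being instances of `=` via `isEq`. -/

inductive RuleName : Type
  | aiDown | aiUp | awDown | awUp | acDown | acUp
  | s | m
  | eqOrComm | eqAndComm
  | eqOrAssocL | eqOrAssocR | eqAndAssocL | eqAndAssocR
  | eqOrUnitDel | eqOrUnitAdd | eqAndUnitDel | eqAndUnitAdd
  | eqTTDel | eqTTAdd | eqFFDel | eqFFAdd
  deriving DecidableEq

namespace RuleName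

/-- The atomic structural rules. -/
def isStructural : RuleName → Bool
  | .aiDown | .aiUp | .awDown | .awUp | .acDown | .acUp => true
  | _ => false

/-- The rule names that are instances of the rule `=`. -/
def isEq : RuleName → Bool
  | .aiDown | .aiUp | .awDown | .awUp | .acDown | .acUp | .s | .m => false
  | _ => true

end RuleName

/-- Rule instances (redex ⟹ contractum). -/
inductive RuleInstance : RuleName → Formula → Formula → Prop
  | aiDown (n : ℕ) (b : Bool) :
      RuleInstance .aiDown .tt (.or (.atom n b) (.atom n (!b)))
  | aiUp (n : ℕ) (b : Bool) :
      RuleInstance .aiUp (.and (.atom n b) (.atom n (!b))) .ff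
  | awDown (n : ℕ) (b : Bool) : RuleInstance .awDown .ff (.atom n b)
  | awUp (n : ℕ) (b : Bool) : RuleInstance .awUp (.atom n b) .tt
  | acDown (n : ℕ) (b : Bool) :
      RuleInstance .acDown (.or (.atom n b) (.atom n b)) (.atom n b)
  | acUp (n : ℕ) (b : Bool) :
      RuleInstance .acUp (.atom n b) (.and (.atom n b) (.atom n b))
  | s (α β γ : Formula) :
      RuleInstance .s (.and α (.or β γ)) (.or (.and α β) γ)
  | m (α β γ δ : Formula) :
      RuleInstance .m (.or (.and α β) (.and γ δ)) (.and (.or α γ) (.or β δ))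
  | eqOrComm (α β : Formula) : RuleInstance .eqOrComm (.or α β) (.or β α)
  | eqAndComm (α β : Formula) : RuleInstance .eqAndComm (.and α β) (.and β α)
  | eqOrAssocL (α β γ : Formula) :
      RuleInstance .eqOrAssocL (.or (.or α β) γ) (.or α (.or β γ))
  | eqOrAssocR (α β γ : Formula) :
      RuleInstance .eqOrAssocR (.or α (.or β γ)) (.or (.or α β) γ)
  | eqAndAssocL (α β γ : Formula) :
      RuleInstance .eqAndAssocL (.and (.and α β) γ) (.and α (.and β γ))
  | eqAndAssocR (α β γ : Formula) :
      RuleInstance .eqAndAssocR (.and α (.and β γ)) (.and (.and α β) γ)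
  | eqOrUnitDel (α : Formula) : RuleInstance .eqOrUnitDel (.or α .ff) α
  | eqOrUnitAdd (α : Formula) : RuleInstance .eqOrUnitAdd α (.or α .ff)
  | eqAndUnitDel (α : Formula) : RuleInstance .eqAndUnitDel (.and α .tt) α
  | eqAndUnitAdd (α : Formula) : RuleInstance .eqAndUnitAdd α (.and α .tt)
  | eqTTDel : RuleInstance .eqTTDel (.or .tt .tt) .tt
  | eqTTAdd : RuleInstance .eqTTAdd .tt (.or .tt .tt)
  | eqFFDel : RuleInstance .eqFFDel (.and .ff .ff) .ff
  | eqFFAdd : RuleInstance .eqFFAdd .ff (.and .ff .ff)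

/-- One (deep) inference step applying rule `r` at position `q`. -/
def StepAt (r : RuleName) (q : List Bool) (φ ψ : Formula) : Prop :=
  ∃ γ δ, φ.sub q = some γ ∧ RuleInstance r γ δ ∧ ψ = φ.repl q δ

/-- One inference step using a rule from the set `S`. -/
def Step (S : Set RuleName) (φ ψ : Formula) : Prop :=
  ∃ r ∈ S, ∃ q, StepAt r q φ ψ

/-- There is a derivation from `φ` to `ψ` using only rules from `S`. -/
def Derives (S : Set RuleName) : Formula → Formula → Prop :=
  Relation.ReflTransGen (Step S)

/-! ### Derivations as explicit data (for the theory of atomic flows). -/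

/-- A derivation: a premiss and a chain of steps, each recorded by its rule
name, the position of the redex, and the resulting formula. -/
structure Deriv : Type where
  prem : Formula
  steps : List (RuleName × List Bool × Formula)

namespace Deriv

/-- The `i`-th step datum. -/
def stepAt (Φ : Deriv) (i : ℕ) : RuleName × List Bool × Formula :=
  Φ.steps.getD i (RuleName.s, ([] : List Bool), Formula.tt)

/-- The `i`-th formula of the derivation (`0` is the premiss). -/
def fml (Φ : Deriv) (i : ℕ) : Formula :=
  (Φ.prem :: Φ.steps.map (fun t => t.2.2)).getD i Φ.prem

/-- Number of formulae in the derivation. -/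
def nf (Φ : Deriv) : ℕ := Φ.steps.length + 1

/-- The conclusion of the derivation. -/
def concl (Φ : Deriv) : Formula := Φ.fml Φ.steps.length

/-- The derivation is well formed: every recorded step is a correct
inference step of SKS. -/
def WF (Φ : Deriv) : Prop :=
  ∀ i, i < Φ.steps.length →
    StepAt (Φ.stepAt i).1 (Φ.stepAt i).2.1 (Φ.fml i) (Φ.fml (i + 1))

end Deriv

/-! ### Atomic flows. -/

inductive FlowLabel : Type
  | aiDown | aiUp | awDown | awUp | acDown | acUp
  deriving DecidableEq

/-- Required (number of lower edges, number of upper edges) of a vertex. -/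
def labDeg : FlowLabel → ℕ × ℕ
  | .aiDown => (2, 0)
  | .aiUp => (0, 2)
  | .awDown => (1, 0)
  | .awUp => (0, 1)
  | .acDown => (1, 2)
  | .acUp => (2, 1)

/-- The data of an atomic flow: vertices, edges, labels, and the two
endpoint maps.  `up e = none` means the upper endpoint is `⊤`, and
`lo e = none` means the lower endpoint is `⊥`. -/
structure PreFlow : Type where
  V : Finset ℕ
  E : Finset ℕ
  η : ℕ → FlowLabel
  up : ℕ → Option ℕ
  lo : ℕ → Option ℕ

namespace PreFlow

/-- Lower edges of a vertex. -/
def Ledges (F : PreFlow) (v : ℕ) : Finset ℕ :=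
  F.E.filter (fun e => F.up e = some v)

/-- Upper edges of a vertex. -/
def Uedges (F : PreFlow) (v : ℕ) : Finset ℕ :=
  F.E.filter (fun e => F.lo e = some v)

/-- All edges of a vertex. -/
def edges (F : PreFlow) (v : ℕ) : Finset ℕ := F.Ledges v ∪ F.Uedges v

def degOK (F : PreFlow) : Prop :=
  ∀ v ∈ F.V, (F.Ledges v).card = (labDeg (F.η v)).1 ∧
    (F.Uedges v).card = (labDeg (F.η v)).2

def endpointsOK (F : PreFlow) : Prop :=
  ∀ e ∈ F.E, (∀ v, F.up e = some v → v ∈ F.V) ∧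
    (∀ v, F.lo e = some v → v ∈ F.V)

/-- No cyclic sequence of edges `ε₁, …, ε_h` with
`up (ε_i) = lo (ε_(i+1 mod h))`. -/
def Acyclic (F : PreFlow) : Prop :=
  ¬ ∃ (h : ℕ) (ε : Fin (h + 1) → ℕ), (∀ i, ε i ∈ F.E) ∧
      ∀ i : Fin (h + 1), (F.up (ε i)).isSome ∧ F.up (ε i) = F.lo (ε (i + 1))

/-- `π` is a polarity assignment (`false` = `−`, `true` = `+`). -/
def PolarityOK (F : PreFlow) (π : ℕ → Bool) : Prop :=
  ∀ v ∈ F.V,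
    ((F.η v = .acDown ∨ F.η v = .acUp) →
      ∀ e₁ ∈ F.edges v, ∀ e₂ ∈ F.edges v, π e₁ = π e₂) ∧
    ((F.η v = .aiDown ∨ F.η v = .aiUp) →
      ∃ e₁ ∈ F.edges v, ∃ e₂ ∈ F.edges v, π e₁ ≠ π e₂)

/-- `F` is an atomic flow. -/
def IsFlow (F : PreFlow) : Prop :=
  F.degOK ∧ F.endpointsOK ∧ F.Acyclic ∧ ∃ π, F.PolarityOK π

end PreFlow

/-! ### Paths, ai-paths, cycles. -/

/-- An endpoint of a path: a vertex, or `⊤`, or `⊥`. -/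
inductive VPt : Type
  | ver : ℕ → VPt
  | top : VPt
  | bot : VPt
  deriving DecidableEq

/-- The upper endpoint of edge `e` is `ν`. -/
def srcOK (F : PreFlow) (ν : VPt) (e : ℕ) : Prop :=
  match ν with
  | .ver v => F.up e = some v
  | .top => F.up e = none
  | .bot => False

/-- The lower endpoint of edge `e` is `ν`. -/
def tgtOK (F : PreFlow) (ν : VPt) (e : ℕ) : Prop :=
  match ν with
  | .ver v => F.lo e = some v
  | .bot => F.lo e = none
  | .top => False

/-- A downward path from `ν` to `ν'` (a nonempty sequence of edges, each
hanging from the lower endpoint of the previous one). -/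
def IsDownPath (F : PreFlow) (ν ν' : VPt) (l : List ℕ) : Prop :=
  l ≠ [] ∧ (∀ e ∈ l, e ∈ F.E) ∧
  (∀ i, i + 1 < l.length →
    ∃ v ∈ F.V, F.lo (l.getD i 0) = some v ∧ F.up (l.getD (i + 1) 0) = some v) ∧
  srcOK F ν (l.getD 0 0) ∧ tgtOK F ν' (l.getD (l.length - 1) 0)

/-- A path from `ν` to `ν'`: a downward path, or the reverse of a
downward path from `ν'` to `ν`. -/
def IsPath (F : PreFlow) (ν ν' : VPt) (l : List ℕ) : Prop :=
  IsDownPath F ν ν' l ∨ IsDownPath F ν' ν l.reverse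

/-- ai-paths: paths, closed under concatenation (in distinct edges) at
interaction and cointeraction vertices. -/
inductive AIPath (F : PreFlow) : VPt → VPt → List ℕ → Prop
  | single {ν ν' : VPt} {l : List ℕ} : IsPath F ν ν' l → AIPath F ν ν' l
  | join {ν ν' : VPt} {v : ℕ} {l₁ l₂ : List ℕ} {e e' : ℕ} :
      v ∈ F.V → (F.η v = .aiDown ∨ F.η v = .aiUp) →
      AIPath F ν (.ver v) (l₁ ++ [e]) →
      AIPath F (.ver v) ν' (e' :: l₂) →
      e ≠ e' →
      AIPath F ν ν' (l₁ ++ [e] ++ e' :: l₂)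

/-- The flow contains an ai-cycle: an ai-path from a vertex to itself in
which no edge appears twice. -/
def HasAICycle (F : PreFlow) : Prop :=
  ∃ v l, v ∈ F.V ∧ AIPath F (.ver v) (.ver v) l ∧ l.Nodup

def CycleFree (F : PreFlow) : Prop := ¬ HasAICycle F

/-- An ai-connection: a path from an interaction vertex to a cointeraction
vertex or vice versa. -/
def IsConnection (F : PreFlow) (l : List ℕ) : Prop :=
  ∃ v v', v ∈ F.V ∧ v' ∈ F.V ∧
    ((F.η v = .aiDown ∧ F.η v' = .aiUp) ∨
     (F.η v = .aiUp ∧ F.η v' = .aiDown)) ∧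
    IsPath F (.ver v) (.ver v') l

/-- A simple edge: an ai-connection consisting of a single edge. -/
def SimpleEdge (F : PreFlow) (e : ℕ) : Prop := IsConnection F [e]

/-- A clean path: an ai-path all of whose ai-connections are simple edges. -/
def IsCleanPath (F : PreFlow) (ν ν' : VPt) (l : List ℕ) : Prop :=
  AIPath F ν ν' l ∧
  ∀ l₁ l₂ l₃, l = l₁ ++ l₂ ++ l₃ → IsConnection F l₂ → l₂.length = 1

/-! ### Local flow reduction rules. -/

open PreFlow

/-- Rule `w↓-c↓`: a weakening feeding a contraction is erased, merging the
contraction's other two edges. -/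
def RedWdCd (A B : PreFlow) : Prop :=
  ∃ v₁ v₂ e e₂ e₃,
    v₁ ∈ A.V ∧ v₂ ∈ A.V ∧ v₁ ≠ v₂ ∧
    A.η v₁ = .awDown ∧ A.η v₂ = .acDown ∧
    e ∈ A.E ∧ e₂ ∈ A.E ∧ e₃ ∈ A.E ∧ e ≠ e₂ ∧ e ≠ e₃ ∧ e₂ ≠ e₃ ∧
    A.up e = some v₁ ∧ A.lo e = some v₂ ∧
    A.lo e₂ = some v₂ ∧ A.up e₃ = some v₂ ∧
    B.V = (A.V.erase v₁).erase v₂ ∧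
    B.E = (A.E.erase e).erase e₃ ∧
    B.η = A.η ∧ B.up = A.up ∧
    B.lo = Function.update A.lo e₂ (A.lo e₃)

/-- Rule `c↑-w↑` (dual of `w↓-c↓`). -/
def RedCuWu (A B : PreFlow) : Prop :=
  ∃ v₁ v₂ e e₂ e₃,
    v₁ ∈ A.V ∧ v₂ ∈ A.V ∧ v₁ ≠ v₂ ∧
    A.η v₁ = .awUp ∧ A.η v₂ = .acUp ∧
    e ∈ A.E ∧ e₂ ∈ A.E ∧ e₃ ∈ A.E ∧ e ≠ e₂ ∧ e ≠ e₃ ∧ e₂ ≠ e₃ ∧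
    A.lo e = some v₁ ∧ A.up e = some v₂ ∧
    A.up e₂ = some v₂ ∧ A.lo e₃ = some v₂ ∧
    B.V = (A.V.erase v₁).erase v₂ ∧
    B.E = (A.E.erase e).erase e₃ ∧
    B.η = A.η ∧ B.lo = A.lo ∧
    B.up = Function.update A.up e₂ (A.up e₃)

/-- Rule `w↓-i↑`: a weakening feeding a cointeraction is replaced by a
coweakening on the other cointeraction edge. -/
def RedWdIu (A B : PreFlow) : Prop :=
  ∃ v₁ v₂ e e₂,
    v₁ ∈ A.V ∧ v₂ ∈ A.V ∧ v₁ ≠ v₂ ∧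
    A.η v₁ = .awDown ∧ A.η v₂ = .aiUp ∧
    e ∈ A.E ∧ e₂ ∈ A.E ∧ e ≠ e₂ ∧
    A.up e = some v₁ ∧ A.lo e = some v₂ ∧ A.lo e₂ = some v₂ ∧
    B.V = A.V.erase v₁ ∧ B.E = A.E.erase e ∧
    B.η = Function.update A.η v₂ .awUp ∧
    B.up = A.up ∧ B.lo = A.lo

/-- Rule `i↓-w↑` (dual of `w↓-i↑`). -/
def RedIdWu (A B : PreFlow) : Prop :=
  ∃ v₁ v₂ e e₂,
    v₁ ∈ A.V ∧ v₂ ∈ A.V ∧ v₁ ≠ v₂ ∧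
    A.η v₁ = .awUp ∧ A.η v₂ = .aiDown ∧
    e ∈ A.E ∧ e₂ ∈ A.E ∧ e ≠ e₂ ∧
    A.lo e = some v₁ ∧ A.up e = some v₂ ∧ A.up e₂ = some v₂ ∧
    B.V = A.V.erase v₁ ∧ B.E = A.E.erase e ∧
    B.η = Function.update A.η v₂ .awDown ∧
    B.up = A.up ∧ B.lo = A.lo

/-- Rule `w↓-w↑`: a weakening joined to a coweakening is erased. -/
def RedWdWu (A B : PreFlow) : Prop :=
  ∃ v₁ v₂ e,
    v₁ ∈ A.V ∧ v₂ ∈ A.V ∧ v₁ ≠ v₂ ∧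
    A.η v₁ = .awDown ∧ A.η v₂ = .awUp ∧
    e ∈ A.E ∧ A.up e = some v₁ ∧ A.lo e = some v₂ ∧
    B.V = (A.V.erase v₁).erase v₂ ∧ B.E = A.E.erase e ∧
    B.η = A.η ∧ B.up = A.up ∧ B.lo = A.lo

/-- Rule `w↓-c↑`: a weakening feeding a cocontraction is replaced by two
weakenings. -/
def RedWdCu (A B : PreFlow) : Prop :=
  ∃ v₁ v₂ e e₁ e₂,
    v₁ ∈ A.V ∧ v₂ ∈ A.V ∧ v₁ ≠ v₂ ∧
    A.η v₁ = .awDown ∧ A.η v₂ = .acUp ∧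
    e ∈ A.E ∧ e₁ ∈ A.E ∧ e₂ ∈ A.E ∧ e ≠ e₁ ∧ e ≠ e₂ ∧ e₁ ≠ e₂ ∧
    A.up e = some v₁ ∧ A.lo e = some v₂ ∧
    A.up e₁ = some v₂ ∧ A.up e₂ = some v₂ ∧
    B.V = A.V ∧ B.E = A.E.erase e ∧
    B.η = Function.update A.η v₂ .awDown ∧
    B.up = Function.update A.up e₁ (some v₁) ∧
    B.lo = A.lo

/-- Rule `c↓-w↑` (dual of `w↓-c↑`). -/
def RedCdWu (A B : PreFlow) : Prop :=
  ∃ v₁ v₂ e e₁ e₂,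
    v₁ ∈ A.V ∧ v₂ ∈ A.V ∧ v₁ ≠ v₂ ∧
    A.η v₁ = .awUp ∧ A.η v₂ = .acDown ∧
    e ∈ A.E ∧ e₁ ∈ A.E ∧ e₂ ∈ A.E ∧ e ≠ e₁ ∧ e ≠ e₂ ∧ e₁ ≠ e₂ ∧
    A.lo e = some v₁ ∧ A.up e = some v₂ ∧
    A.lo e₁ = some v₂ ∧ A.lo e₂ = some v₂ ∧
    B.V = A.V ∧ B.E = A.E.erase e ∧
    B.η = Function.update A.η v₂ .awUp ∧
    B.lo = Function.update A.lo e₁ (some v₁) ∧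
    B.up = A.up

/-- Rule `c↓-i↑`: a contraction whose output edge enters a cointeraction is
replaced by a cocontraction on the other cointeraction edge followed by two
cointeractions. -/
def RedCdIu (A B : PreFlow) : Prop :=
  ∃ v₁ v₂ v₃ e e₁ e₂ e₃ g₁ g₂,
    v₁ ∈ A.V ∧ v₂ ∈ A.V ∧ v₁ ≠ v₂ ∧ v₃ ∉ A.V ∧
    A.η v₁ = .acDown ∧ A.η v₂ = .aiUp ∧
    e ∈ A.E ∧ e₁ ∈ A.E ∧ e₂ ∈ A.E ∧ e₃ ∈ A.E ∧
    e ≠ e₁ ∧ e ≠ e₂ ∧ e ≠ e₃ ∧ e₁ ≠ e₂ ∧ e₁ ≠ e₃ ∧ e₂ ≠ e₃ ∧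
    g₁ ∉ A.E ∧ g₂ ∉ A.E ∧ g₁ ≠ g₂ ∧
    A.lo e₁ = some v₁ ∧ A.lo e₂ = some v₁ ∧
    A.up e = some v₁ ∧ A.lo e = some v₂ ∧ A.lo e₃ = some v₂ ∧
    B.V = insert v₃ A.V ∧
    B.E = insert g₁ (insert g₂ (A.E.erase e)) ∧
    B.η = Function.update (Function.update A.η v₁ .acUp) v₃ .aiUp ∧
    B.up = Function.update (Function.update A.up g₁ (some v₁)) g₂ (some v₁) ∧
    B.lo = Function.update (Function.update (Function.update
      (Function.update (Function.update A.lo e₁ (some v₂)) e₂ (some v₃))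
        e₃ (some v₁)) g₁ (some v₂)) g₂ (some v₃)

/-- Rule `i↓-c↑` (dual of `c↓-i↑`). -/
def RedIdCu (A B : PreFlow) : Prop :=
  ∃ v₁ v₂ v₃ e e₁ e₂ e₃ g₁ g₂,
    v₁ ∈ A.V ∧ v₂ ∈ A.V ∧ v₁ ≠ v₂ ∧ v₃ ∉ A.V ∧
    A.η v₁ = .acUp ∧ A.η v₂ = .aiDown ∧
    e ∈ A.E ∧ e₁ ∈ A.E ∧ e₂ ∈ A.E ∧ e₃ ∈ A.E ∧
    e ≠ e₁ ∧ e ≠ e₂ ∧ e ≠ e₃ ∧ e₁ ≠ e₂ ∧ e₁ ≠ e₃ ∧ e₂ ≠ e₃ ∧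
    g₁ ∉ A.E ∧ g₂ ∉ A.E ∧ g₁ ≠ g₂ ∧
    A.up e₁ = some v₁ ∧ A.up e₂ = some v₁ ∧
    A.lo e = some v₁ ∧ A.up e = some v₂ ∧ A.up e₃ = some v₂ ∧
    B.V = insert v₃ A.V ∧
    B.E = insert g₁ (insert g₂ (A.E.erase e)) ∧
    B.η = Function.update (Function.update A.η v₁ .acDown) v₃ .aiDown ∧
    B.lo = Function.update (Function.update A.lo g₁ (some v₁)) g₂ (some v₁) ∧
    B.up = Function.update (Function.update (Function.update
      (Function.update (Function.update A.up e₁ (some v₂)) e₂ (some v₃))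
        e₃ (some v₁)) g₁ (some v₂)) g₂ (some v₃)

/-- Rule `c↓-c↑`: a contraction whose output enters a cocontraction is
replaced by two cocontractions above two contractions, crosswise connected. -/
def RedCdCu (A B : PreFlow) : Prop :=
  ∃ v₁ v₂ v₃ v₄ e e₁ e₂ e₃ e₄ g₁₁ g₁₂ g₂₁ g₂₂,
    v₁ ∈ A.V ∧ v₂ ∈ A.V ∧ v₁ ≠ v₂ ∧
    v₃ ∉ A.V ∧ v₄ ∉ A.V ∧ v₃ ≠ v₄ ∧
    A.η v₁ = .acDown ∧ A.η v₂ = .acUp ∧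
    e ∈ A.E ∧ e₁ ∈ A.E ∧ e₂ ∈ A.E ∧ e₃ ∈ A.E ∧ e₄ ∈ A.E ∧
    e ≠ e₁ ∧ e ≠ e₂ ∧ e ≠ e₃ ∧ e ≠ e₄ ∧
    e₁ ≠ e₂ ∧ e₁ ≠ e₃ ∧ e₁ ≠ e₄ ∧ e₂ ≠ e₃ ∧ e₂ ≠ e₄ ∧ e₃ ≠ e₄ ∧
    g₁₁ ∉ A.E ∧ g₁₂ ∉ A.E ∧ g₂₁ ∉ A.E ∧ g₂₂ ∉ A.E ∧
    g₁₁ ≠ g₁₂ ∧ g₁₁ ≠ g₂₁ ∧ g₁₁ ≠ g₂₂ ∧ g₁₂ ≠ g₂₁ ∧ g₁₂ ≠ g₂₂ ∧ g₂₁ ≠ g₂₂ ∧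
    A.lo e₁ = some v₁ ∧ A.lo e₂ = some v₁ ∧ A.up e = some v₁ ∧
    A.lo e = some v₂ ∧ A.up e₃ = some v₂ ∧ A.up e₄ = some v₂ ∧
    B.V = insert v₃ (insert v₄ A.V) ∧
    B.E = insert g₁₁ (insert g₁₂ (insert g₂₁ (insert g₂₂ (A.E.erase e)))) ∧
    B.η = Function.update (Function.update (Function.update
      (Function.update A.η v₁ .acUp) v₂ .acUp) v₃ .acDown) v₄ .acDown ∧
    B.up = Function.update (Function.update (Function.update
      (Function.update (Function.update (Function.update A.up
        e₃ (some v₃)) e₄ (some v₄)) g₁₁ (some v₁)) g₁₂ (some v₁))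
          g₂₁ (some v₂)) g₂₂ (some v₂) ∧
    B.lo = Function.update (Function.update (Function.update
      (Function.update (Function.update A.lo e₂ (some v₂)) g₁₁ (some v₃))
        g₁₂ (some v₄)) g₂₁ (some v₃)) g₂₂ (some v₄)

/-- One step of the flow rewriting system `w`. -/
def StepW (A B : PreFlow) : Prop :=
  RedWdCd A B ∨ RedCuWu A B ∨ RedWdIu A B ∨ RedIdWu A B ∨
  RedWdWu A B ∨ RedWdCu A B ∨ RedCdWu A B

/-- One step of the flow rewriting system `c`. -/
def StepC (A B : PreFlow) : Prop :=
  RedCdIu A B ∨ RedIdCu A B ∨ RedCdCu A B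

/-- `A` is normal for the flow rewriting system `w`. -/
def NormalW (A : PreFlow) : Prop := ¬ ∃ B, StepW A B

/-- `A` is normal for the flow rewriting system `c`. -/
def NormalC (A : PreFlow) : Prop := ¬ ∃ B, StepC A B

/-! ### Flow isomorphisms. -/

structure FlowIso (A B : PreFlow) : Type where
  vmap : ℕ → ℕ
  emap : ℕ → ℕ
  vbij : Set.BijOn vmap (A.V : Set ℕ) (B.V : Set ℕ)
  ebij : Set.BijOn emap (A.E : Set ℕ) (B.E : Set ℕ)
  lab : ∀ v ∈ A.V, B.η (vmap v) = A.η v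
  upc : ∀ e ∈ A.E, B.up (emap e) = (A.up e).map vmap
  loc : ∀ e ∈ A.E, B.lo (emap e) = (A.lo e).map vmap

/-! ### The global reduction `→se` (elimination of a simple edge). -/

/-- The flow obtained from `B` by eliminating the simple edge `e0` between
the interaction `vi` and the cointeraction `vc` (with `e2` the other lower
edge of `vi` and `e3` the other upper edge of `vc`): two copies (tags `0`,
hat, the lower one, and `1`, tilde, the upper one) of the remaining flow are
glued by identifying the hat copy of `e2` with the tilde copy of `e3`; a
weakening (vertex `(2,0)`) is placed above the tilde copy of `e2`, a
coweakening (vertex `(2,1)`) below the hat copy of `e3`; each upper edge `ε`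
of `B` gives a cocontraction (vertex `(3,ε)`, with a new upper edge `(3,ε)`)
joining the two copies of `ε`, and dually each lower edge `ε'` of `B` gives
a contraction (vertex `(4,ε')`, with a new lower edge `(4,ε')`). -/
def seFlow (B : PreFlow) (vi vc e0 e2 e3 : ℕ) : PreFlow :=
  { V := ((B.V.erase vi).erase vc).image (Nat.pair 0) ∪
         ((B.V.erase vi).erase vc).image (Nat.pair 1) ∪
         {Nat.pair 2 0, Nat.pair 2 1} ∪
         (B.E.filter (fun e => B.up e = none)).image (Nat.pair 3) ∪
         (B.E.filter (fun e => B.lo e = none)).image (Nat.pair 4),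
    E := (B.E.erase e0).image (Nat.pair 0) ∪
         (B.E.erase e0).image (fun e => if e = e3 then Nat.pair 0 e2 else Nat.pair 1 e) ∪
         (B.E.filter (fun e => B.up e = none)).image (Nat.pair 3) ∪
         (B.E.filter (fun e => B.lo e = none)).image (Nat.pair 4),
    η := fun x =>
      if (Nat.unpair x).1 = 2 then
        (if (Nat.unpair x).2 = 0 then FlowLabel.awDown else FlowLabel.awUp)
      else if (Nat.unpair x).1 = 3 then FlowLabel.acUp
      else if (Nat.unpair x).1 = 4 then FlowLabel.acDown
      else B.η (Nat.unpair x).2,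
    up := fun x =>
      let t := (Nat.unpair x).1
      let y := (Nat.unpair x).2
      if t = 0 then
        (if y = e2 then
          (match B.up e3 with
           | some v => some (Nat.pair 1 v)
           | none => some (Nat.pair 3 e3))
        else
          (match B.up y with
           | some v => some (Nat.pair 0 v)
           | none => some (Nat.pair 3 y)))
      else if t = 1 then
        (if y = e2 then some (Nat.pair 2 0)
        else
          (match B.up y with
           | some v => some (Nat.pair 1 v)
           | none => some (Nat.pair 3 y)))
      else if t = 3 then none
      else some (Nat.pair 4 y),
    lo := fun x =>
      let t := (Nat.unpair x).1
      let y := (Nat.unpair x).2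
      if t = 0 then
        (if y = e2 then
          (match B.lo e2 with
           | some v => some (Nat.pair 0 v)
           | none => some (Nat.pair 4 e2))
        else if y = e3 then some (Nat.pair 2 1)
        else
          (match B.lo y with
           | some v => some (Nat.pair 0 v)
           | none => some (Nat.pair 4 y)))
      else if t = 1 then
        (match B.lo y with
         | some v => some (Nat.pair 1 v)
         | none => some (Nat.pair 4 y))
      else if t = 3 then some (Nat.pair 3 y)
      else none }

/-- The reduction `→se`: elimination of a simple edge (up to flow
isomorphism). -/
def RedSE (B C : PreFlow) : Prop :=
  ∃ vi vc e0 e2 e3,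
    vi ∈ B.V ∧ vc ∈ B.V ∧ vi ≠ vc ∧
    B.η vi = .aiDown ∧ B.η vc = .aiUp ∧
    e0 ∈ B.E ∧ e2 ∈ B.E ∧ e3 ∈ B.E ∧
    e0 ≠ e2 ∧ e0 ≠ e3 ∧ e2 ≠ e3 ∧
    B.up e0 = some vi ∧ B.lo e0 = some vc ∧
    B.up e2 = some vi ∧ B.lo e3 = some vc ∧
    Nonempty (FlowIso C (seFlow B vi vc e0 e2 e3))

/-! ### The atomic flow associated with a derivation. -/

/-- Correspondence conditions for a linear rule applied at position `q`:
for each pair `(c₁, c₂)` in `cs`, occurrences at `q ++ c₁ ++ p` in the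
conclusion (formula `i+1`) are traced to occurrences at `q ++ c₂ ++ p` in
the premiss (formula `i`). -/
def corrCond (f : ℕ → List Bool → ℕ) (i : ℕ) (q : List Bool) (ψ : Formula)
    (cs : List (List Bool × List Bool)) : Prop :=
  ∀ c ∈ cs, ∀ p : List Bool, ψ.IsOcc (q ++ c.1 ++ p) →
    f (i + 1) (q ++ c.1 ++ p) = f i (q ++ c.2 ++ p)

/-- The tracing conditions for one inference step: occurrences in the
context are traced to the same edge, and the active occurrences of a
structural rule are related to the edges of the vertex `v` as prescribed by
its label, while the active occurrences of logical and `=` steps are traced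
to the same edges under the canonical correspondence. -/
def stepCond (A : PreFlow) (f : ℕ → List Bool → ℕ) (v : ℕ) (i : ℕ)
    (r : RuleName) (q : List Bool) (φ ψ : Formula) : Prop :=
  (∀ p, ¬ (q <+: p) → φ.IsOcc p → f (i + 1) p = f i p) ∧
  match r with
  | .aiDown =>
      A.η v = .aiDown ∧
      A.up (f (i + 1) (q ++ [false])) = some v ∧
      A.up (f (i + 1) (q ++ [true])) = some v ∧
      f (i + 1) (q ++ [false]) ≠ f (i + 1) (q ++ [true])
  | .aiUp =>
      A.η v = .aiUp ∧
      A.lo (f i (q ++ [false])) = some v ∧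
      A.lo (f i (q ++ [true])) = some v ∧
      f i (q ++ [false]) ≠ f i (q ++ [true])
  | .awDown => A.η v = .awDown ∧ A.up (f (i + 1) q) = some v
  | .awUp => A.η v = .awUp ∧ A.lo (f i q) = some v
  | .acDown =>
      A.η v = .acDown ∧
      A.lo (f i (q ++ [false])) = some v ∧
      A.lo (f i (q ++ [true])) = some v ∧
      A.up (f (i + 1) q) = some v ∧
      f i (q ++ [false]) ≠ f i (q ++ [true])
  | .acUp =>
      A.η v = .acUp ∧
      A.lo (f i q) = some v ∧
      A.up (f (i + 1) (q ++ [false])) = some v ∧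
      A.up (f (i + 1) (q ++ [true])) = some v ∧
      f (i + 1) (q ++ [false]) ≠ f (i + 1) (q ++ [true])
  | .s => corrCond f i q ψ
      [([false, false], [false]), ([false, true], [true, false]),
       ([true], [true, true])]
  | .m => corrCond f i q ψ
      [([false, false], [false, false]), ([true, false], [false, true]),
       ([false, true], [true, false]), ([true, true], [true, true])]
  | .eqOrComm => corrCond f i q ψ [([false], [true]), ([true], [false])]
  | .eqAndComm => corrCond f i q ψ [([false], [true]), ([true], [false])]
  | .eqOrAssocL => corrCond f i q ψ
      [([false], [false, false]), ([true, false], [false, true]),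
       ([true, true], [true])]
  | .eqOrAssocR => corrCond f i q ψ
      [([false, false], [false]), ([false, true], [true, false]),
       ([true], [true, true])]
  | .eqAndAssocL => corrCond f i q ψ
      [([false], [false, false]), ([true, false], [false, true]),
       ([true, true], [true])]
  | .eqAndAssocR => corrCond f i q ψ
      [([false, false], [false]), ([false, true], [true, false]),
       ([true], [true, true])]
  | .eqOrUnitDel => corrCond f i q ψ [([], [false])]
  | .eqOrUnitAdd => corrCond f i q ψ [([false], [])]
  | .eqAndUnitDel => corrCond f i q ψ [([], [false])]
  | .eqAndUnitAdd => corrCond f i q ψ [([false], [])]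
  | .eqTTDel => True
  | .eqTTAdd => True
  | .eqFFDel => True
  | .eqFFAdd => True

/-- `A` is the atomic flow associated with the derivation `Φ`, where `f`
maps each atom occurrence (formula index, position) of `Φ` to an edge of
`A`, and `g` assigns to each structural inference step its vertex. -/
def IsAssocFlow (Φ : Deriv) (A : PreFlow) (f : ℕ → List Bool → ℕ)
    (g : ℕ → ℕ) : Prop :=
  Φ.WF ∧ A.IsFlow ∧
  (∀ i p, i < Φ.nf → (Φ.fml i).IsOcc p → f i p ∈ A.E) ∧
  (∀ e ∈ A.E, ∃ i p, i < Φ.nf ∧ (Φ.fml i).IsOcc p ∧ f i p = e) ∧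
  (∀ i p p', i < Φ.nf → (Φ.fml i).IsOcc p → (Φ.fml i).IsOcc p' →
    f i p = f i p' → p = p') ∧
  (∀ p, (Φ.fml 0).IsOcc p → A.up (f 0 p) = none) ∧
  (∀ p, (Φ.fml Φ.steps.length).IsOcc p → A.lo (f Φ.steps.length p) = none) ∧
  (∀ i, i < Φ.steps.length → (Φ.stepAt i).1.isStructural = true → g i ∈ A.V) ∧
  (∀ v ∈ A.V, ∃ i, i < Φ.steps.length ∧
    (Φ.stepAt i).1.isStructural = true ∧ g i = v) ∧
  (∀ i j, i < Φ.steps.length → j < Φ.steps.length →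
    (Φ.stepAt i).1.isStructural = true → (Φ.stepAt j).1.isStructural = true →
    g i = g j → i = j) ∧
  (∀ i, i < Φ.steps.length →
    stepCond A f (g i) i (Φ.stepAt i).1 (Φ.stepAt i).2.1
      (Φ.fml i) (Φ.fml (i + 1)))

/-! ### Streamlining. -/

/-- No path from an interaction or weakening vertex to a cointeraction or
coweakening vertex. -/
def NoIWPath (A : PreFlow) : Prop :=
  ¬ ∃ v v' l, v ∈ A.V ∧ v' ∈ A.V ∧
      (A.η v = .aiDown ∨ A.η v = .awDown) ∧
      (A.η v' = .aiUp ∨ A.η v' = .awUp) ∧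
      IsPath A (.ver v) (.ver v') l

/-- `Φ` is a streamlined derivation. -/
def Streamlined (Φ : Deriv) : Prop :=
  ∃ A f g, IsAssocFlow Φ A f g ∧ NoIWPath A

/-- `Φ` is a super-streamlined derivation. -/
def SuperStreamlined (Φ : Deriv) : Prop :=
  ∃ A f g, IsAssocFlow Φ A f g ∧ NoIWPath A ∧ NormalW A

/-- `Φ` is a hyper-streamlined derivation. -/
def HyperStreamlined (Φ : Deriv) : Prop :=
  ∃ A f g, IsAssocFlow Φ A f g ∧ NoIWPath A ∧ NormalW A ∧ NormalC A

end AF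
set_option maxHeartbeats 1000000 in
section
end

namespace AF
namespace Sim8

open PreFlow

def hd0 (l : List ℕ) : ℕ := l.getD 0 0
def la0 (l : List ℕ) : ℕ := l.getD (l.length - 1) 0

@[simp] lemma hd0_cons (a : ℕ) (l : List ℕ) : hd0 (a :: l) = a := rfl

lemma la0_singleton (a : ℕ) : la0 [a] = a := rfl

lemma la0_cons {a : ℕ} {l : List ℕ} (h : l ≠ []) : la0 (a :: l) = la0 l := by
  cases l with
  | nil => exact absurd rfl h
  | cons b t =>
    simp only [la0, List.length_cons, Nat.add_sub_cancel, List.getD_cons_succ]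

lemma hd0_append {l : List ℕ} (m : List ℕ) (h : l ≠ []) :
    hd0 (l ++ m) = hd0 l := by
  cases l with
  | nil => exact absurd rfl h
  | cons a t => simp [hd0]

lemma la0_append (l : List ℕ) {m : List ℕ} (h : m ≠ []) :
    la0 (l ++ m) = la0 m := by
  induction l with
  | nil => simp
  | cons a t ih =>
    have ht : t ++ m ≠ [] := fun hh => h (List.append_eq_nil_iff.mp hh).2
    rw [List.cons_append, la0_cons ht, ih]

lemma la0_reverse {l : List ℕ} (h : l ≠ []) : la0 l.reverse = hd0 l := by
  cases l with
  | nil => exact absurd rfl h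
  | cons a t =>
    rw [List.reverse_cons, la0_append _ (by simp : ([a] : List ℕ) ≠ [])]
    rfl

lemma hd0_reverse {l : List ℕ} (h : l ≠ []) : hd0 l.reverse = la0 l := by
  have := la0_reverse (l := l.reverse) (by simpa using h)
  rw [List.reverse_reverse] at this
  exact this.symm

lemma hd0_mem {l : List ℕ} (h : l ≠ []) : hd0 l ∈ l := by
  cases l with
  | nil => exact absurd rfl h
  | cons a t => simp [hd0]

lemma la0_mem {l : List ℕ} (h : l ≠ []) : la0 l ∈ l := by
  have := hd0_mem (l := l.reverse) (by simpa using h)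
  rw [hd0_reverse h] at this
  exact List.mem_reverse.mp this

lemma getLast_eq_la0 {l : List ℕ} (h : l ≠ []) : l.getLast h = la0 l := by
  induction l with
  | nil => exact absurd rfl h
  | cons a t ih =>
    cases t with
    | nil => rfl
    | cons b t' =>
      rw [List.getLast_cons (by simp), ih (by simp)]
      exact (la0_cons (by simp)).symm

lemma head_eq_hd0 {l : List ℕ} (h : l ≠ []) : l.head h = hd0 l := by
  cases l with
  | nil => exact absurd rfl h
  | cons a t => rfl

/-- A nonempty downward chain of edges in a preflow. -/
inductive Chain (F : PreFlow) : List ℕ → Prop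
  | single {e : ℕ} : e ∈ F.E → Chain F [e]
  | cons {e e' : ℕ} {l : List ℕ} : e ∈ F.E →
      (∃ v ∈ F.V, F.lo e = some v ∧ F.up e' = some v) →
      Chain F (e' :: l) → Chain F (e :: e' :: l)

namespace Chain

lemma ne_nil {F : PreFlow} {l : List ℕ} (h : Chain F l) : l ≠ [] := by
  cases h <;> simp

lemma exists_cons {F : PreFlow} {l : List ℕ} (h : Chain F l) :
    ∃ a t, l = a :: t := by
  cases h with
  | single _ => exact ⟨_, _, rfl⟩
  | cons _ _ _ => exact ⟨_, _, rfl⟩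

lemma mem_E {F : PreFlow} {l : List ℕ} (h : Chain F l) : ∀ e ∈ l, e ∈ F.E := by
  induction h with
  | single he => simpa using he
  | cons he hlink _ ih =>
    intro x hx
    rcases List.mem_cons.mp hx with rfl | hx
    · exact he
    · exact ih x hx

lemma links {F : PreFlow} {l : List ℕ} (h : Chain F l) :
    ∀ i, i + 1 < l.length →
      ∃ v ∈ F.V, F.lo (l.getD i 0) = some v ∧ F.up (l.getD (i + 1) 0) = some v := by
  induction h with
  | single he => intro i hi; simp at hi
  | @cons e e' l he hlink hch ih =>
    intro i hi
    cases i with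
    | zero => simpa using hlink
    | succ j =>
      have hj : j + 1 < (e' :: l).length := by
        simpa [List.length_cons] using hi
      simpa using ih j hj

lemma cons' {F : PreFlow} {e : ℕ} {m : List ℕ} (hm : Chain F m) (he : e ∈ F.E)
    (hlink : ∃ v ∈ F.V, F.lo e = some v ∧ F.up (hd0 m) = some v) :
    Chain F (e :: m) := by
  obtain ⟨a, t, rfl⟩ := hm.exists_cons
  exact Chain.cons he (by simpa using hlink) hm

lemma append {F : PreFlow} {l m : List ℕ} (hl : Chain F l) (hm : Chain F m)
    (hlink : ∃ v ∈ F.V, F.lo (la0 l) = some v ∧ F.up (hd0 m) = some v) :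
    Chain F (l ++ m) := by
  induction hl with
  | @single e he =>
    exact hm.cons' he (by simpa [la0_singleton] using hlink)
  | @cons e e' l he hlink' hch ih =>
    have h1 : Chain F ((e' :: l) ++ m) := ih (by
      rwa [la0_cons (show (e' :: l) ≠ [] by simp)] at hlink)
    exact h1.cons' he (by
      rwa [hd0_append m (by simp)])

lemma of_conds {F : PreFlow} {l : List ℕ} (hne : l ≠ [])
    (hmem : ∀ e ∈ l, e ∈ F.E)
    (hlk : ∀ i, i + 1 < l.length →
      ∃ v ∈ F.V, F.lo (l.getD i 0) = some v ∧ F.up (l.getD (i + 1) 0) = some v) :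
    Chain F l := by
  induction l with
  | nil => exact absurd rfl hne
  | cons a t ih =>
    cases t with
    | nil => exact Chain.single (hmem a (by simp))
    | cons b t' =>
      have h0 := hlk 0 (by simp)
      refine Chain.cons (hmem a (by simp)) (by simpa using h0) ?_
      refine ih (by simp) (fun e he => hmem e (by simp [he])) ?_
      intro i hi
      have h' := hlk (i + 1) (by simpa using Nat.succ_lt_succ hi)
      simpa using h'

end Chain

lemma isDownPath_iff {F : PreFlow} {ν ν' : VPt} {l : List ℕ} :
    IsDownPath F ν ν' l ↔
      Chain F l ∧ srcOK F ν (hd0 l) ∧ tgtOK F ν' (la0 l) := by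
  constructor
  · rintro ⟨hne, hmem, hlk, hsrc, htgt⟩
    exact ⟨Chain.of_conds hne hmem hlk, hsrc, htgt⟩
  · rintro ⟨hch, hsrc, htgt⟩
    exact ⟨hch.ne_nil, hch.mem_E, hch.links, hsrc, htgt⟩

/-- A simulation of `B` inside `A`. -/
structure Sim (A B : PreFlow) where
  ch : ℕ → List ℕ
  chain : ∀ x ∈ B.E, Chain A (ch x)
  up_eq : ∀ x ∈ B.E, A.up (hd0 (ch x)) = B.up x
  lo_eq : ∀ x ∈ B.E, A.lo (la0 (ch x)) = B.lo x
  vsub : ∀ v ∈ B.V, v ∈ A.V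
  lab : ∀ v ∈ B.V, (B.η v = .aiDown ∨ B.η v = .aiUp) → A.η v = B.η v
  disj : ∀ x ∈ B.E, ∀ y ∈ B.E, ∀ z, z ∈ ch x → z ∈ ch y → x = y
  nd : ∀ x ∈ B.E, (ch x).Nodup

namespace Sim

variable {A B : PreFlow} (S : Sim A B)

lemma ch_ne {x : ℕ} (hx : x ∈ B.E) : S.ch x ≠ [] := (S.chain x hx).ne_nil

lemma flatMap_cons_eq (a : ℕ) (t : List ℕ) :
    (a :: t).flatMap S.ch = S.ch a ++ t.flatMap S.ch := by
  simp [List.flatMap_cons]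

lemma bind_hd0 {l : List ℕ} (hl : Chain B l) :
    hd0 (l.flatMap S.ch) = hd0 (S.ch (hd0 l)) := by
  cases hl with
  | @single e he =>
    simp [List.flatMap_cons]
  | @cons e e' t he hlink hch =>
    rw [S.flatMap_cons_eq, hd0_append _ (S.ch_ne he), hd0_cons]

lemma bind_la0 {l : List ℕ} (hl : Chain B l) :
    la0 (l.flatMap S.ch) = la0 (S.ch (la0 l)) := by
  induction hl with
  | @single e he =>
    simp [List.flatMap_cons, la0_singleton]
  | @cons e e' t he hlink hch ih =>
    have hne : (e' :: t).flatMap S.ch ≠ [] := by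
      rw [S.flatMap_cons_eq]
      intro h
      exact S.ch_ne (hch.mem_E e' (by simp)) (List.append_eq_nil_iff.mp h).1
    rw [S.flatMap_cons_eq, la0_append _ hne, ih,
      la0_cons (show (e' :: t) ≠ [] by simp)]

lemma bind_chain {l : List ℕ} (hl : Chain B l) : Chain A (l.flatMap S.ch) := by
  induction hl with
  | @single e he =>
    simpa [List.flatMap_cons] using S.chain e he
  | @cons e e' t he hlink hch ih =>
    rw [S.flatMap_cons_eq]
    refine (S.chain e he).append ih ?_
    obtain ⟨v, hv, hlo, hup⟩ := hlink
    refine ⟨v, S.vsub v hv, ?_, ?_⟩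
    · rw [S.lo_eq e he]; exact hlo
    · rw [S.bind_hd0 hch, hd0_cons, S.up_eq e' (hch.mem_E e' (by simp))]
      exact hup

lemma bind_nodup {l : List ℕ} (hl : Chain B l) (hnd : l.Nodup) :
    (l.flatMap S.ch).Nodup := by
  induction hl with
  | @single e he => simpa [List.flatMap_cons] using S.nd e he
  | @cons e e' t he hlink hch ih =>
    rw [S.flatMap_cons_eq]
    have hnd' : (e' :: t).Nodup := hnd.of_cons
    refine List.Nodup.append (S.nd e he) (ih hnd') ?_
    intro z hz hz'
    obtain ⟨x, hx, hzx⟩ := List.mem_flatMap.mp hz'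
    have hex : e = x := S.disj e he x (hch.mem_E x hx) z hz hzx
    subst hex
    exact (List.nodup_cons.mp hnd).1 hx

/-- Properties transferred along a path simulation. -/
def P (S : Sim A B) (l m : List ℕ) : Prop :=
  (∀ z ∈ m, ∃ x ∈ l, z ∈ S.ch x) ∧ (l.Nodup → m.Nodup) ∧ m ≠ [] ∧
    hd0 m ∈ S.ch (hd0 l) ∧ la0 m ∈ S.ch (la0 l)

lemma down {ν ν' : VPt} {l : List ℕ} (h : IsDownPath B ν ν' l) :
    IsDownPath A ν ν' (l.flatMap S.ch) ∧ S.P l (l.flatMap S.ch) := by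
  rw [isDownPath_iff] at h
  obtain ⟨hch, hsrc, htgt⟩ := h
  have hhd : hd0 l ∈ B.E := hch.mem_E _ (hd0_mem hch.ne_nil)
  have hla : la0 l ∈ B.E := hch.mem_E _ (la0_mem hch.ne_nil)
  have hchA := S.bind_chain hch
  constructor
  · rw [isDownPath_iff]
    refine ⟨hchA, ?_, ?_⟩
    · rw [S.bind_hd0 hch]
      have hu := S.up_eq (hd0 l) hhd
      cases ν with
      | ver v => show A.up _ = some v; rw [hu]; exact hsrc
      | top => show A.up _ = none; rw [hu]; exact hsrc
      | bot => exact hsrc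
    · rw [S.bind_la0 hch]
      have hlo := S.lo_eq (la0 l) hla
      cases ν' with
      | ver v => show A.lo _ = some v; rw [hlo]; exact htgt
      | bot => show A.lo _ = none; rw [hlo]; exact htgt
      | top => exact htgt
  · refine ⟨fun z hz => List.mem_flatMap.mp hz, S.bind_nodup hch, hchA.ne_nil,
      ?_, ?_⟩
    · rw [S.bind_hd0 hch]
      exact hd0_mem (S.ch_ne hhd)
    · rw [S.bind_la0 hch]
      exact la0_mem (S.ch_ne hla)

lemma path {ν ν' : VPt} {l : List ℕ} (h : IsPath B ν ν' l) :
    ∃ m, IsPath A ν ν' m ∧ S.P l m := by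
  rcases h with h | h
  · obtain ⟨h1, h2⟩ := S.down h
    exact ⟨l.flatMap S.ch, Or.inl h1, h2⟩
  · obtain ⟨h1, ⟨hm, hnd, hne, hh, hl⟩⟩ := S.down h
    have hlne : l ≠ [] := by
      intro h'
      exact (isDownPath_iff.mp h).1.ne_nil (by simp [h'])
    refine ⟨(l.reverse.flatMap S.ch).reverse, Or.inr (by simpa using h1),
      ?_, ?_, ?_, ?_, ?_⟩
    · intro z hz
      obtain ⟨x, hx, hzx⟩ := hm z (List.mem_reverse.mp hz)
      exact ⟨x, List.mem_reverse.mp hx, hzx⟩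
    · intro hndl
      exact List.nodup_reverse.mpr (hnd (List.nodup_reverse.mpr hndl))
    · intro hc
      rw [List.reverse_eq_nil_iff] at hc
      exact hne hc
    · rw [hd0_reverse hne, ← la0_reverse hlne]
      exact hl
    · rw [la0_reverse hne, ← hd0_reverse hlne]
      exact hh

lemma aipath_mem_E {ν ν' : VPt} {l : List ℕ} (h : AIPath B ν ν' l) :
    ∀ e ∈ l, e ∈ B.E := by
  induction h with
  | single hp =>
    rcases hp with hp | hp
    · exact hp.2.1
    · intro e he
      exact hp.2.1 e (List.mem_reverse.mpr he)
  | join hv hη h1 h2 hne ih1 ih2 =>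
    intro x hx
    simp only [List.append_assoc, List.mem_append, List.mem_cons,
      List.mem_singleton] at hx
    rcases hx with hx | hx | hx
    · exact ih1 x (by simp [hx])
    · exact ih1 x (List.mem_append.mpr (Or.inr (by
        simpa using hx)))
    · exact ih2 x (by simpa using hx)

set_option maxHeartbeats 2000000 in
lemma aipath {ν ν' : VPt} {l : List ℕ} (h : AIPath B ν ν' l) :
    ∃ m, AIPath A ν ν' m ∧ S.P l m := by
  induction h with
  | single hp =>
    obtain ⟨m, hm, hP⟩ := S.path hp
    exact ⟨m, AIPath.single hm, hP⟩
  | @join ν ν' v l₁ l₂ e e' hv hη h1 h2 hne ih1 ih2 =>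
    obtain ⟨m₁, hm₁, hP₁⟩ := ih1
    obtain ⟨m₂, hm₂, hP₂⟩ := ih2
    obtain ⟨hmem₁, hnd₁, hne₁, hh₁, hl₁⟩ := hP₁
    obtain ⟨hmem₂, hnd₂, hne₂, hh₂, hl₂⟩ := hP₂
    have hvA : v ∈ A.V := S.vsub v hv
    have hηA : A.η v = .aiDown ∨ A.η v = .aiUp := by
      have hl := S.lab v hv hη
      rw [hl]; exact hη
    have heB : e ∈ B.E := aipath_mem_E h1 e (by simp)
    have he'B : e' ∈ B.E := aipath_mem_E h2 e' (by simp)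
    have hla₁ : la0 m₁ ∈ S.ch e := by
      rwa [la0_append _ (by simp : ([e] : List ℕ) ≠ []), la0_singleton] at hl₁
    have hh₂' : hd0 m₂ ∈ S.ch e' := by simpa using hh₂
    have hfne : la0 m₁ ≠ hd0 m₂ := by
      intro hcontra
      exact hne (S.disj e heB e' he'B (la0 m₁) hla₁ (hcontra ▸ hh₂'))
    have hm₁' : AIPath A ν (.ver v) (m₁.dropLast ++ [m₁.getLast hne₁]) := by
      rwa [List.dropLast_append_getLast hne₁]
    have hm₂' : AIPath A (.ver v) ν' (m₂.head hne₂ :: m₂.tail) := by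
      rwa [List.cons_head_tail]
    have hjoin := AIPath.join hvA hηA hm₁' hm₂' (by
      rw [getLast_eq_la0 hne₁, head_eq_hd0 hne₂]; exact hfne)
    rw [List.dropLast_append_getLast hne₁, List.cons_head_tail] at hjoin
    refine ⟨m₁ ++ m₂, hjoin, ?_, ?_,
      fun hc => hne₁ (List.append_eq_nil_iff.mp hc).1, ?_, ?_⟩
    · intro z hz
      rcases List.mem_append.mp hz with hz | hz
      · obtain ⟨x, hx, hzx⟩ := hmem₁ z hz
        refine ⟨x, ?_, hzx⟩
        simp only [List.append_assoc, List.mem_append, List.mem_cons] at hx ⊢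
        tauto
      · obtain ⟨x, hx, hzx⟩ := hmem₂ z hz
        refine ⟨x, ?_, hzx⟩
        simp only [List.append_assoc, List.mem_append, List.mem_cons] at hx ⊢
        tauto
    · intro hndl
      rw [List.nodup_append] at hndl
      obtain ⟨hnda, hndb, hdisj⟩ := hndl
      refine List.Nodup.append (hnd₁ hnda) (hnd₂ hndb) ?_
      intro z hz₁ hz₂
      obtain ⟨x₁, hx₁, hzx₁⟩ := hmem₁ z hz₁
      obtain ⟨x₂, hx₂, hzx₂⟩ := hmem₂ z hz₂
      have hx₁B : x₁ ∈ B.E := aipath_mem_E h1 x₁ hx₁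
      have hx₂B : x₂ ∈ B.E := aipath_mem_E h2 x₂ hx₂
      have hxx : x₁ = x₂ := S.disj x₁ hx₁B x₂ hx₂B z hzx₁ hzx₂
      subst hxx
      exact hdisj _ hx₁ _ hx₂ rfl
    · rw [hd0_append m₂ hne₁, hd0_append (e' :: l₂) (by simp : l₁ ++ [e] ≠ [])]
      exact hh₁
    · rw [la0_append m₁ hne₂, la0_append (l₁ ++ [e]) (by simp : e' :: l₂ ≠ [])]
      exact hl₂

lemma cycleFree' {A B : PreFlow} (S : Sim A B) (hA : CycleFree A) : CycleFree B := by
  rintro ⟨v, l, hv, hpath, hnd⟩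
  obtain ⟨m, hm, hmem, hnod, _, _, _⟩ := S.aipath hpath
  exact hA ⟨v, m, S.vsub v hv, hm, hnod hnd⟩

end Sim

end Sim8
end AF
namespace AF
namespace Sim8

open PreFlow

lemma la0_pair (a b : ℕ) : la0 [a, b] = b := rfl
lemma hd0_pair (a b : ℕ) : hd0 [a, b] = a := rfl

/-- Identity simulation. -/
def idSim (A B : PreFlow)
    (hE : ∀ x ∈ B.E, x ∈ A.E)
    (hup : ∀ x ∈ B.E, A.up x = B.up x)
    (hlo : ∀ x ∈ B.E, A.lo x = B.lo x)
    (hV : ∀ v ∈ B.V, v ∈ A.V)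
    (hlab : ∀ v ∈ B.V, (B.η v = .aiDown ∨ B.η v = .aiUp) → A.η v = B.η v) :
    Sim A B where
  ch := fun x => [x]
  chain := fun x hx => Chain.single (hE x hx)
  up_eq := fun x hx => hup x hx
  lo_eq := fun x hx => hlo x hx
  vsub := hV
  lab := hlab
  disj := by
    intro x _ y _ z hzx hzy
    simp only [List.mem_singleton] at hzx hzy
    omega
  nd := by intro x _; simp

/-- Simulation in which one edge `x₀` is expanded into the chain `c`. -/
def extSim (A B : PreFlow) (x₀ : ℕ) (c : List ℕ)
    (hE : ∀ x ∈ B.E, x ∈ A.E)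
    (hchain : Chain A c)
    (hupc : A.up (hd0 c) = B.up x₀)
    (hloc : A.lo (la0 c) = B.lo x₀)
    (hndc : c.Nodup)
    (hc : ∀ z ∈ c, z = x₀ ∨ z ∉ B.E)
    (hup : ∀ x ∈ B.E, x ≠ x₀ → A.up x = B.up x)
    (hlo : ∀ x ∈ B.E, x ≠ x₀ → A.lo x = B.lo x)
    (hV : ∀ v ∈ B.V, v ∈ A.V)
    (hlab : ∀ v ∈ B.V, (B.η v = .aiDown ∨ B.η v = .aiUp) → A.η v = B.η v) :
    Sim A B where
  ch := fun x => if x = x₀ then c else [x]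
  chain := by
    intro x hx
    by_cases h : x = x₀
    · simpa [h] using hchain
    · simpa [h] using Chain.single (hE x hx)
  up_eq := by
    intro x hx
    by_cases h : x = x₀
    · subst h; simpa using hupc
    · simpa [h] using hup x hx h
  lo_eq := by
    intro x hx
    by_cases h : x = x₀
    · subst h; simpa using hloc
    · simpa [h, la0_singleton] using hlo x hx h
  vsub := hV
  lab := hlab
  disj := by
    intro x hx y hy z hzx hzy
    beta_reduce at hzx hzy
    by_cases h : x = x₀ <;> by_cases h' : y = x₀
    · rw [h, h']
    · rw [if_pos h] at hzx
      rw [if_neg h'] at hzy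
      simp only [List.mem_singleton] at hzy
      rcases hc z hzx with h'' | h''
      · exact absurd (hzy.symm.trans h'') h'
      · rw [hzy] at h''
        exact absurd hy h''
    · rw [if_neg h] at hzx
      rw [if_pos h'] at hzy
      simp only [List.mem_singleton] at hzx
      rcases hc z hzy with h'' | h''
      · exact absurd (hzx.symm.trans h'') h
      · rw [hzx] at h''
        exact absurd hx h''
    · rw [if_neg h] at hzx
      rw [if_neg h'] at hzy
      simp only [List.mem_singleton] at hzx hzy
      rw [← hzx, ← hzy]
  nd := by
    intro x _
    by_cases h : x = x₀
    · simpa [h] using hndc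
    · simp [h]

lemma redWdCd_sim {A B : PreFlow} (h : RedWdCd A B) : Nonempty (Sim A B) := by
  obtain ⟨v₁, v₂, e, e₂, e₃, hv₁, hv₂, hvne, hη₁, hη₂, he, he₂, he₃, hee₂, hee₃,
    he₂e₃, hup_e, hlo_e, hlo_e₂, hup_e₃, hV, hE, hη, hup, hlo⟩ := h
  refine ⟨extSim A B e₂ [e₂, e₃] ?_ ?_ ?_ ?_ ?_ ?_ ?_ ?_ ?_ ?_⟩
  · intro x hx
    rw [hE] at hx
    exact Finset.mem_of_mem_erase (Finset.mem_of_mem_erase hx)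
  · exact Chain.cons he₂ ⟨v₂, hv₂, hlo_e₂, hup_e₃⟩ (Chain.single he₃)
  · rw [hd0_pair, hup]
  · rw [la0_pair, hlo, Function.update_self]
  · simp [he₂e₃]
  · intro z hz
    rcases List.mem_cons.mp hz with rfl | hz
    · exact Or.inl rfl
    · simp only [List.mem_singleton] at hz
      subst hz
      right
      rw [hE]
      simp
  · intro x _ _; rw [hup]
  · intro x _ hx; rw [hlo, Function.update_of_ne hx]
  · intro v hv
    rw [hV] at hv
    exact Finset.mem_of_mem_erase (Finset.mem_of_mem_erase hv)
  · intro v _ _; rw [hη]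

lemma redCuWu_sim {A B : PreFlow} (h : RedCuWu A B) : Nonempty (Sim A B) := by
  obtain ⟨v₁, v₂, e, e₂, e₃, hv₁, hv₂, hvne, hη₁, hη₂, he, he₂, he₃, hee₂, hee₃,
    he₂e₃, hlo_e, hup_e, hup_e₂, hlo_e₃, hV, hE, hη, hlo, hup⟩ := h
  refine ⟨extSim A B e₂ [e₃, e₂] ?_ ?_ ?_ ?_ ?_ ?_ ?_ ?_ ?_ ?_⟩
  · intro x hx
    rw [hE] at hx
    exact Finset.mem_of_mem_erase (Finset.mem_of_mem_erase hx)
  · exact Chain.cons he₃ ⟨v₂, hv₂, hlo_e₃, hup_e₂⟩ (Chain.single he₂)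
  · rw [hd0_pair, hup, Function.update_self]
  · rw [la0_pair, hlo]
  · simp [Ne.symm he₂e₃]
  · intro z hz
    rcases List.mem_cons.mp hz with rfl | hz
    · right
      rw [hE]
      simp
    · simp only [List.mem_singleton] at hz
      subst hz
      exact Or.inl rfl
  · intro x _ hx; rw [hup, Function.update_of_ne hx]
  · intro x _ _; rw [hlo]
  · intro v hv
    rw [hV] at hv
    exact Finset.mem_of_mem_erase (Finset.mem_of_mem_erase hv)
  · intro v _ _; rw [hη]

lemma redWdIu_sim {A B : PreFlow} (h : RedWdIu A B) : Nonempty (Sim A B) := by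
  obtain ⟨v₁, v₂, e, e₂, hv₁, hv₂, hvne, hη₁, hη₂, he, he₂, hee₂,
    hup_e, hlo_e, hlo_e₂, hV, hE, hη, hup, hlo⟩ := h
  refine ⟨idSim A B ?_ ?_ ?_ ?_ ?_⟩
  · intro x hx; rw [hE] at hx; exact Finset.mem_of_mem_erase hx
  · intro x _; rw [hup]
  · intro x _; rw [hlo]
  · intro v hv; rw [hV] at hv; exact Finset.mem_of_mem_erase hv
  · intro v _ hai
    rw [hη]
    by_cases hvv : v = v₂
    · subst hvv
      rw [hη, Function.update_self] at hai
      rcases hai with h' | h' <;> exact absurd h' (by simp)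
    · rw [Function.update_of_ne hvv]

lemma redIdWu_sim {A B : PreFlow} (h : RedIdWu A B) : Nonempty (Sim A B) := by
  obtain ⟨v₁, v₂, e, e₂, hv₁, hv₂, hvne, hη₁, hη₂, he, he₂, hee₂,
    hlo_e, hup_e, hup_e₂, hV, hE, hη, hup, hlo⟩ := h
  refine ⟨idSim A B ?_ ?_ ?_ ?_ ?_⟩
  · intro x hx; rw [hE] at hx; exact Finset.mem_of_mem_erase hx
  · intro x _; rw [hup]
  · intro x _; rw [hlo]
  · intro v hv; rw [hV] at hv; exact Finset.mem_of_mem_erase hv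
  · intro v _ hai
    rw [hη]
    by_cases hvv : v = v₂
    · subst hvv
      rw [hη, Function.update_self] at hai
      rcases hai with h' | h' <;> exact absurd h' (by simp)
    · rw [Function.update_of_ne hvv]

lemma redWdWu_sim {A B : PreFlow} (h : RedWdWu A B) : Nonempty (Sim A B) := by
  obtain ⟨v₁, v₂, e, hv₁, hv₂, hvne, hη₁, hη₂, he, hup_e, hlo_e,
    hV, hE, hη, hup, hlo⟩ := h
  refine ⟨idSim A B ?_ ?_ ?_ ?_ ?_⟩
  · intro x hx; rw [hE] at hx; exact Finset.mem_of_mem_erase hx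
  · intro x _; rw [hup]
  · intro x _; rw [hlo]
  · intro v hv
    rw [hV] at hv
    exact Finset.mem_of_mem_erase (Finset.mem_of_mem_erase hv)
  · intro v _ _; rw [hη]

lemma redWdCu_sim {A B : PreFlow} (h : RedWdCu A B) : Nonempty (Sim A B) := by
  obtain ⟨v₁, v₂, e, e₁, e₂, hv₁, hv₂, hvne, hη₁, hη₂, he, he₁, he₂, hee₁, hee₂,
    he₁e₂, hup_e, hlo_e, hup_e₁, hup_e₂, hV, hE, hη, hup, hlo⟩ := h
  refine ⟨extSim A B e₁ [e, e₁] ?_ ?_ ?_ ?_ ?_ ?_ ?_ ?_ ?_ ?_⟩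
  · intro x hx; rw [hE] at hx; exact Finset.mem_of_mem_erase hx
  · exact Chain.cons he ⟨v₂, hv₂, hlo_e, hup_e₁⟩ (Chain.single he₁)
  · rw [hd0_pair, hup, Function.update_self, hup_e]
  · rw [la0_pair, hlo]
  · simp [hee₁]
  · intro z hz
    rcases List.mem_cons.mp hz with rfl | hz
    · right
      rw [hE]
      simp
    · simp only [List.mem_singleton] at hz
      subst hz
      exact Or.inl rfl
  · intro x _ hx; rw [hup, Function.update_of_ne hx]
  · intro x _ _; rw [hlo]
  · intro v hv; rw [hV] at hv; exact hv
  · intro v _ hai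
    rw [hη]
    by_cases hvv : v = v₂
    · subst hvv
      rw [hη, Function.update_self] at hai
      rcases hai with h' | h' <;> exact absurd h' (by simp)
    · rw [Function.update_of_ne hvv]

lemma redCdWu_sim {A B : PreFlow} (h : RedCdWu A B) : Nonempty (Sim A B) := by
  obtain ⟨v₁, v₂, e, e₁, e₂, hv₁, hv₂, hvne, hη₁, hη₂, he, he₁, he₂, hee₁, hee₂,
    he₁e₂, hlo_e, hup_e, hlo_e₁, hlo_e₂, hV, hE, hη, hlo, hup⟩ := h
  refine ⟨extSim A B e₁ [e₁, e] ?_ ?_ ?_ ?_ ?_ ?_ ?_ ?_ ?_ ?_⟩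
  · intro x hx; rw [hE] at hx; exact Finset.mem_of_mem_erase hx
  · exact Chain.cons he₁ ⟨v₂, hv₂, hlo_e₁, hup_e⟩ (Chain.single he)
  · rw [hd0_pair, hup]
  · rw [la0_pair, hlo, Function.update_self, hlo_e]
  · simp [Ne.symm hee₁]
  · intro z hz
    rcases List.mem_cons.mp hz with rfl | hz
    · exact Or.inl rfl
    · simp only [List.mem_singleton] at hz
      subst hz
      right
      rw [hE]
      simp
  · intro x _ _; rw [hup]
  · intro x _ hx; rw [hlo, Function.update_of_ne hx]
  · intro v hv; rw [hV] at hv; exact hv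
  · intro v _ hai
    rw [hη]
    by_cases hvv : v = v₂
    · subst hvv
      rw [hη, Function.update_self] at hai
      rcases hai with h' | h' <;> exact absurd h' (by simp)
    · rw [Function.update_of_ne hvv]

lemma stepW_cycleFree {A B : PreFlow} (h : StepW A B) (hA : CycleFree A) :
    CycleFree B := by
  rcases h with h | h | h | h | h | h | h
  · exact (redWdCd_sim h).elim fun S => S.cycleFree' hA
  · exact (redCuWu_sim h).elim fun S => S.cycleFree' hA
  · exact (redWdIu_sim h).elim fun S => S.cycleFree' hA
  · exact (redIdWu_sim h).elim fun S => S.cycleFree' hA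
  · exact (redWdWu_sim h).elim fun S => S.cycleFree' hA
  · exact (redWdCu_sim h).elim fun S => S.cycleFree' hA
  · exact (redCdWu_sim h).elim fun S => S.cycleFree' hA

end Sim8
end AF

namespace AF

/-- If an atomic flow `A` is cycle-free and `A →w* B`,
then `B` is cycle-free. -/
theorem statement_8 (A B : PreFlow) (hA : A.IsFlow) (hcf : CycleFree A)
    (h : Relation.ReflTransGen StepW A B) : CycleFree B := by
  induction h with
  | refl => exact hcf
  | tail _ hstep ih => exact Sim8.stepW_cycleFree hstep ih

end AF
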